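/- Under the hypotheses of the previous setting (a vector space X with linear maps Φ_x : H_n → X satisfying the projection and composition rules), the partial order x ≤ y ⇔ σ(x,y) = y makes X a vector lattice: every pair (x,y) has supremum σ(x,y), the order is translation-invariant, and it is invariant under multiplication by nonnegative scalars. Moreover each Φ_x is then a vector lattice homomorphism. -/

import Mathlib

/-- `H_n`: positively homogeneous continuous functions `ℝⁿ → ℝ`. -/
def MemHn {n : ℕ} (f : (Fin n → ℝ) → ℝ) : Prop :=
  Continuous f ∧ ∀ (c : ℝ), 0 ≤ c → ∀ t, f (c • t) = c * f t

/-- the `i`-th coordinate projection, an element of `H_n`. -/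
def projFn (n : ℕ) (i : Fin n) : (Fin n → ℝ) → ℝ := fun t => t i

section VL
variable {X : Type*} [Lattice X] [AddCommGroup X] [Module ℝ X]

/-- A vector lattice homomorphism `H_n → X`, encoded as a map on all functions
that is linear and sup-preserving on members of `H_n`. -/
def IsVLHomHn {n : ℕ} (Φ : ((Fin n → ℝ) → ℝ) → X) : Prop :=
  (∀ f g, MemHn f → MemHn g → Φ (f + g) = Φ f + Φ g) ∧
  (∀ (c : ℝ) f, MemHn f → Φ (c • f) = c • Φ f) ∧
  (∀ f g, MemHn f → MemHn g → Φ (f ⊔ g) = Φ f ⊔ Φ g)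

/-- The order ideal generated by `e`. -/
def Ie (e : X) : Set X := {x | ∃ l : ℝ, 0 ≤ l ∧ |x| ≤ l • e}

/-- `‖x‖_e = inf {λ ≥ 0 : |x| ≤ λ e}`. -/
noncomputable def enorm (e x : X) : ℝ := sInf {l : ℝ | 0 ≤ l ∧ |x| ≤ l • e}

/-- A sublattice and linear subspace. -/
def IsSubl (S : Set X) : Prop :=
  (0 : X) ∈ S ∧ (∀ a ∈ S, ∀ b ∈ S, a + b ∈ S) ∧
  (∀ (c : ℝ), ∀ a ∈ S, c • a ∈ S) ∧ (∀ a ∈ S, ∀ b ∈ S, a ⊔ b ∈ S)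

/-- `S` is closed in the carrier `C` with respect to the `‖·‖_e`-distance. -/
def ClosedIn (e : X) (C S : Set X) : Prop :=
  ∀ x ∈ C, (∀ ε : ℝ, 0 < ε → ∃ y ∈ S, enorm e (x - y) < ε) → x ∈ S

/-- The closed sublattice of `C` generated by the set `A`. -/
def genClosedSubl (e : X) (C A : Set X) : Set X :=
  ⋂₀ {S : Set X | S ⊆ C ∧ A ⊆ S ∧ IsSubl S ∧ ClosedIn e C S}

/-- The norm `‖·‖_e` is complete on `S`: every `‖·‖_e`-Cauchy sequence in `S`
converges, in `‖·‖_e`, to an element of `S`. -/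
def CompleteOn (e : X) (S : Set X) : Prop :=
  ∀ u : ℕ → X, (∀ k, u k ∈ S) →
    (∀ ε : ℝ, 0 < ε → ∃ N, ∀ m ≥ N, ∀ n ≥ N, enorm e (u m - u n) < ε) →
    ∃ x ∈ S, ∀ ε : ℝ, 0 < ε → ∃ N, ∀ m ≥ N, enorm e (u m - x) < ε

end VL

/-- An Archimedean vector lattice. -/
def IsArchimedeanVL (X : Type*) [Lattice X] [AddCommGroup X] : Prop :=
  ∀ x y : X, 0 ≤ x → 0 ≤ y → (∀ n : ℕ, n • x ≤ y) → x = 0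

/-- The pointwise-maximum function `σ(t₁,t₂) = t₁ ∨ t₂`, an element of `H₂`. -/
noncomputable def sigmaMax : (Fin 2 → ℝ) → ℝ := fun t => max (t 0) (t 1)


lemma memHnProj (n : ℕ) (i : Fin n) : MemHn (projFn n i) :=
  ⟨continuous_apply i, fun _ _ _ => rfl⟩

lemma memHnMax {n : ℕ} {f g : (Fin n → ℝ) → ℝ} (hf : MemHn f) (hg : MemHn g) :
    MemHn (fun t => max (f t) (g t)) := by
  refine ⟨hf.1.max hg.1, fun c hc t => ?_⟩
  simp only [hf.2 c hc, hg.2 c hc]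
  exact (mul_max_of_nonneg _ _ hc).symm

lemma memHnAdd {n : ℕ} {f g : (Fin n → ℝ) → ℝ} (hf : MemHn f) (hg : MemHn g) :
    MemHn (fun t => f t + g t) := by
  refine ⟨hf.1.add hg.1, fun c hc t => ?_⟩
  simp only [hf.2 c hc, hg.2 c hc]
  ring

lemma memHnSmul {n : ℕ} (c : ℝ) {f : (Fin n → ℝ) → ℝ} (hf : MemHn f) :
    MemHn (fun t => c * f t) := by
  refine ⟨hf.1.const_smul c, fun d hd t => ?_⟩
  simp only [hf.2 d hd, smul_eq_mul]
  ring

lemma memHnSigma : MemHn sigmaMax := memHnMax (memHnProj 2 0) (memHnProj 2 1)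

/-- under the projection and composition rules, the partial order
`x ≤ y ⇔ σ(x,y) = y` makes `X` a vector lattice: `σ(x,y)` is the supremum of
`x` and `y`, the order is translation-invariant and invariant under
multiplication by non-negative scalars, and each `Φ_x` is a vector lattice
homomorphism. -/
theorem stmt11 {X : Type*} [AddCommGroup X] [Module ℝ X]
    (Φ : ∀ n : ℕ, (Fin n → X) → ((Fin n → ℝ) → ℝ) → X)
    (hadd : ∀ (n : ℕ) (x : Fin n → X) (f g : (Fin n → ℝ) → ℝ),
      MemHn f → MemHn g → Φ n x (f + g) = Φ n x f + Φ n x g)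
    (hsmul : ∀ (n : ℕ) (x : Fin n → X) (c : ℝ) (f : (Fin n → ℝ) → ℝ),
      MemHn f → Φ n x (c • f) = c • Φ n x f)
    (hproj : ∀ (n : ℕ) (x : Fin n → X) (i : Fin n), Φ n x (projFn n i) = x i)
    (hcomp : ∀ (m n : ℕ) (x : Fin n → X) (f : Fin m → ((Fin n → ℝ) → ℝ))
      (g : (Fin m → ℝ) → ℝ), (∀ i, MemHn (f i)) → MemHn g →
      Φ m (fun i => Φ n x (f i)) g = Φ n x (fun t => g (fun i => f i t)))
    -- the order `x ≤ y ⇔ σ(x,y) = y` :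
    (r : X → X → Prop) (hr : ∀ x y, r x y ↔ Φ 2 ![x, y] sigmaMax = y) :
    -- `σ(x,y)` is the supremum of the pair `(x,y)`:
    (∀ x y : X, r x (Φ 2 ![x, y] sigmaMax) ∧ r y (Φ 2 ![x, y] sigmaMax) ∧
      ∀ z : X, r x z → r y z → r (Φ 2 ![x, y] sigmaMax) z) ∧
    -- translation invariance:
    (∀ x y z : X, r x y → r (x + z) (y + z)) ∧
    -- invariance under multiplication by nonnegative scalars:
    (∀ (c : ℝ) (x y : X), 0 ≤ c → r x y → r (c • x) (c • y)) ∧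
    -- each `Φ_x` is a vector lattice homomorphism:
    (∀ (n : ℕ) (x : Fin n → X) (f g : (Fin n → ℝ) → ℝ), MemHn f → MemHn g →
      Φ n x (f ⊔ g) = Φ 2 ![Φ n x f, Φ n x g] sigmaMax) := by

  have hsg := memHnSigma
  -- composition helper
  have comp2 : ∀ (n : ℕ) (x : Fin n → X) (f g : (Fin n → ℝ) → ℝ), MemHn f → MemHn g →
      Φ 2 ![Φ n x f, Φ n x g] sigmaMax = Φ n x (fun t => max (f t) (g t)) := by
    intro n x f g hf hg
    have h := hcomp 2 n x ![f, g] sigmaMax (by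
      intro i; fin_cases i <;> simpa) hsg
    have e1 : (fun i : Fin 2 => Φ n x (![f, g] i)) = ![Φ n x f, Φ n x g] := by
      funext i; fin_cases i <;> simp
    have e2 : (fun t => sigmaMax (fun i : Fin 2 => ![f, g] i t)) =
        fun t => max (f t) (g t) := by
      funext t; simp [sigmaMax]
    rw [e1, e2] at h
    exact h
  refine ⟨fun x y => ?_, fun x y z hxy => ?_, fun c x y hc hxy => ?_, fun n x f g hf hg => ?_⟩
  · -- supremum property
    have p0 : Φ 2 ![x, y] (projFn 2 0) = x := by rw [hproj]; simp
    have p1 : Φ 2 ![x, y] (projFn 2 1) = y := by rw [hproj]; simp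
    refine ⟨?_, ?_, ?_⟩
    · rw [hr]
      have h := comp2 2 ![x, y] (projFn 2 0) sigmaMax (memHnProj 2 0) hsg
      rw [p0] at h
      rw [h]
      congr 1
      funext t
      show max (t 0) (sigmaMax t) = sigmaMax t
      simp only [sigmaMax]
      rw [← max_assoc, max_self]
    · rw [hr]
      have h := comp2 2 ![x, y] (projFn 2 1) sigmaMax (memHnProj 2 1) hsg
      rw [p1] at h
      rw [h]
      congr 1
      funext t
      show max (t 1) (sigmaMax t) = sigmaMax t
      simp only [sigmaMax]
      rw [max_comm (t 0) (t 1), ← max_assoc, max_self]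
    · intro z hxz hyz
      rw [hr] at hxz hyz ⊢
      have q0 : Φ 3 ![x, y, z] (projFn 3 0) = x := by rw [hproj]; simp
      have q1 : Φ 3 ![x, y, z] (projFn 3 1) = y := by rw [hproj]; simp
      have q2 : Φ 3 ![x, y, z] (projFn 3 2) = z := by rw [hproj]; simp
      have rxy : Φ 2 ![x, y] sigmaMax = Φ 3 ![x, y, z] (fun t => max (t 0) (t 1)) := by
        have h := comp2 3 ![x, y, z] (projFn 3 0) (projFn 3 1)
          (memHnProj 3 0) (memHnProj 3 1)
        rw [q0, q1] at h
        exact h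
      have ryz : Φ 2 ![y, z] sigmaMax = Φ 3 ![x, y, z] (fun t => max (t 1) (t 2)) := by
        have h := comp2 3 ![x, y, z] (projFn 3 1) (projFn 3 2)
          (memHnProj 3 1) (memHnProj 3 2)
        rw [q1, q2] at h
        exact h
      have h1 := comp2 3 ![x, y, z] (fun t => max (t 0) (t 1)) (projFn 3 2)
        (memHnMax (memHnProj 3 0) (memHnProj 3 1)) (memHnProj 3 2)
      rw [q2, ← rxy] at h1
      have h2 := comp2 3 ![x, y, z] (projFn 3 0) (fun t => max (t 1) (t 2))
        (memHnProj 3 0) (memHnMax (memHnProj 3 1) (memHnProj 3 2))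
      rw [q0, ← ryz, hyz, hxz] at h2
      have e : (fun t : Fin 3 → ℝ => max (max (t 0) (t 1)) (projFn 3 2 t)) =
          fun t => max (projFn 3 0 t) (max (t 1) (t 2)) := by
        funext t
        exact max_assoc _ _ _
      rw [e] at h1
      rw [h1, ← h2]
  · -- translation invariance
    rw [hr] at hxy ⊢
    have q2 : Φ 3 ![x, y, z] (projFn 3 2) = z := by rw [hproj]; simp
    have rxy : Φ 2 ![x, y] sigmaMax = Φ 3 ![x, y, z] (fun t => max (t 0) (t 1)) := by
      have q0 : Φ 3 ![x, y, z] (projFn 3 0) = x := by rw [hproj]; simp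
      have q1 : Φ 3 ![x, y, z] (projFn 3 1) = y := by rw [hproj]; simp
      have h := comp2 3 ![x, y, z] (projFn 3 0) (projFn 3 1)
        (memHnProj 3 0) (memHnProj 3 1)
      rw [q0, q1] at h
      exact h
    have fxz : Φ 3 ![x, y, z] (fun t => t 0 + t 2) = x + z := by
      have h := hadd 3 ![x, y, z] (projFn 3 0) (projFn 3 2)
        (memHnProj 3 0) (memHnProj 3 2)
      rw [hproj, hproj] at h
      simp at h; exact h
    have fyz : Φ 3 ![x, y, z] (fun t => t 1 + t 2) = y + z := by
      have h := hadd 3 ![x, y, z] (projFn 3 1) (projFn 3 2)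
        (memHnProj 3 1) (memHnProj 3 2)
      rw [hproj, hproj] at h
      simp at h; exact h
    have h := comp2 3 ![x, y, z] (fun t => t 0 + t 2) (fun t => t 1 + t 2)
      (memHnAdd (memHnProj 3 0) (memHnProj 3 2))
      (memHnAdd (memHnProj 3 1) (memHnProj 3 2))
    rw [fxz, fyz] at h
    have e : (fun t : Fin 3 → ℝ => max (t 0 + t 2) (t 1 + t 2)) =
        fun t => max (t 0) (t 1) + projFn 3 2 t := by
      funext t
      show max (t 0 + t 2) (t 1 + t 2) = max (t 0) (t 1) + t 2
      exact max_add_add_right (t 0) (t 1) (t 2)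
    rw [e] at h
    have h2 := hadd 3 ![x, y, z] (fun t => max (t 0) (t 1)) (projFn 3 2)
      (memHnMax (memHnProj 3 0) (memHnProj 3 1)) (memHnProj 3 2)
    rw [q2, ← rxy, hxy] at h2
    rw [h]
    exact h2
  · -- nonneg scalar invariance
    rw [hr] at hxy ⊢
    have fx : Φ 2 ![x, y] (fun t => c * t 0) = c • x := by
      have h := hsmul 2 ![x, y] c (projFn 2 0) (memHnProj 2 0)
      rw [hproj] at h
      simp at h; exact h
    have fy : Φ 2 ![x, y] (fun t => c * t 1) = c • y := by
      have h := hsmul 2 ![x, y] c (projFn 2 1) (memHnProj 2 1)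
      rw [hproj] at h
      simp at h; exact h
    have h := comp2 2 ![x, y] (fun t => c * t 0) (fun t => c * t 1)
      (memHnSmul c (memHnProj 2 0)) (memHnSmul c (memHnProj 2 1))
    rw [fx, fy] at h
    have e : (fun t : Fin 2 → ℝ => max (c * t 0) (c * t 1)) = c • sigmaMax := by
      funext t
      show max (c * t 0) (c * t 1) = c * sigmaMax t
      simp only [sigmaMax]
      exact (mul_max_of_nonneg _ _ hc).symm
    rw [e, hsmul 2 ![x, y] c sigmaMax hsg, hxy] at h
    exact h
  · -- lattice homomorphism
    have h := comp2 n x f g hf hg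
    rw [h]
    rfl
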